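/- If a finite product of topological spaces is CLP-compact, then it is CLP-rectangular. -/

import Mathlib

/-- CLP-compact: every clopen cover has a finite subcover. -/
def CLPCompact (X : Type*) [TopologicalSpace X] : Prop :=
  ∀ C : Set (Set X), (∀ U ∈ C, IsClopen U) → ⋃₀ C = Set.univ →
    ∃ D ⊆ C, D.Finite ∧ ⋃₀ D = Set.univ

/-- A finite product is CLP-rectangular if every point of every clopen set is contained
in a clopen rectangle included in that set. -/
def CLPRectangular {n : ℕ} (X : Fin n → Type*) [∀ i, TopologicalSpace (X i)] : Prop :=
  ∀ U : Set (∀ i, X i), IsClopen U → ∀ x ∈ U,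
    ∃ R : ∀ i, Set (X i), (∀ i, IsClopen (R i)) ∧
      x ∈ Set.univ.pi R ∧ Set.univ.pi R ⊆ U

private lemma clopen_pi {n : ℕ} {X : Fin n → Type*} [∀ i, TopologicalSpace (X i)]
    {R : ∀ i, Set (X i)} (hR : ∀ i, IsClopen (R i)) : IsClopen (Set.univ.pi R) :=
  ⟨isClosed_set_pi fun i _ => (hR i).isClosed,
   isOpen_set_pi Set.finite_univ fun i _ => (hR i).isOpen⟩

/-- A CLP-compact finite product is CLP-rectangular. -/
theorem clp_rectangular_of_clp_compact {n : ℕ} (X : Fin n → Type*)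
    [∀ i, TopologicalSpace (X i)] (h : CLPCompact (∀ i, X i)) :
    CLPRectangular X := by
  intro U hU x hx
  by_contra hcon
  push_neg at hcon
  -- the family of clopen sets `U ∪ (box)ᶜ` for clopen boxes around `x`
  set C : Set (Set (∀ i, X i)) :=
    {S | ∃ R : ∀ i, Set (X i), (∀ i, IsClopen (R i)) ∧ x ∈ Set.univ.pi R ∧
      S = U ∪ (Set.univ.pi R)ᶜ} with hC
  have hCclopen : ∀ S ∈ C, IsClopen S := by
    rintro S ⟨R, hR, hxR, rfl⟩
    exact hU.union (clopen_pi hR).compl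
  -- C is not a cover
  have hnotcover : ⋃₀ C ≠ Set.univ := by
    intro hcover
    obtain ⟨D, hDC, hDfin, hDcover⟩ := h C hCclopen hcover
    have hwit : ∀ S ∈ D, ∃ R : ∀ i, Set (X i), (∀ i, IsClopen (R i)) ∧
        x ∈ Set.univ.pi R ∧ S = U ∪ (Set.univ.pi R)ᶜ := fun S hS => hDC hS
    choose! R hRclopen hxR hSR using hwit
    set Q : ∀ i, Set (X i) := fun i => ⋂ S ∈ D, R S i with hQ
    have hQclopen : ∀ i, IsClopen (Q i) := fun i =>
      hDfin.isClopen_biInter fun S hS => hRclopen S hS i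
    have hxQ : x ∈ Set.univ.pi Q := by
      intro i _
      exact Set.mem_biInter fun S hS => hxR S hS i trivial
    refine hcon Q hQclopen hxQ ?_
    intro z hz
    have : z ∈ ⋃₀ D := hDcover ▸ Set.mem_univ z
    obtain ⟨S, hS, hzS⟩ := this
    rw [hSR S hS] at hzS
    rcases hzS with hzU | hzR
    · exact hzU
    · exfalso
      apply hzR
      intro i _
      exact Set.biInter_subset_of_mem hS (hz i trivial)
  -- extract a point missed by C
  have hmiss : ∃ y : ∀ i, X i, y ∉ ⋃₀ C := by
    by_contra hy
    push_neg at hy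
    exact hnotcover (Set.eq_univ_of_forall hy)
  obtain ⟨y, hy⟩ := hmiss
  have hymem : ∀ S ∈ C, y ∉ S := fun S hS hyS => hy ⟨S, hS, hyS⟩
  -- y is not in U
  have hyU : y ∉ U := by
    have := hymem (U ∪ (Set.univ.pi fun i => (Set.univ : Set (X i)))ᶜ)
      ⟨fun _ => Set.univ, fun _ => isClopen_univ, fun i _ => trivial, rfl⟩
    intro hyU'
    exact this (Or.inl hyU')
  -- each y i is in every clopen set containing x i
  have key : ∀ (i : Fin n) (A : Set (X i)), IsClopen A → x i ∈ A → y i ∈ A := by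
    intro i A hA hxA
    classical
    set R : ∀ j, Set (X j) := Function.update (fun j => (Set.univ : Set (X j))) i A with hR
    have hRclopen : ∀ j, IsClopen (R j) := by
      intro j
      rcases eq_or_ne j i with rfl | hji
      · simpa [hR] using hA
      · simp [hR, Function.update_of_ne hji, isClopen_univ]
    have hxR : x ∈ Set.univ.pi R := by
      intro j _
      rcases eq_or_ne j i with rfl | hji
      · simpa [hR] using hxA
      · simp [hR, Function.update_of_ne hji]
    have := hymem (U ∪ (Set.univ.pi R)ᶜ) ⟨R, hRclopen, hxR, rfl⟩
    have hyR : y ∈ Set.univ.pi R := by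
      by_contra hyR
      exact this (Or.inr hyR)
    simpa [hR] using hyR i trivial
  -- swap coordinates one at a time
  classical
  have chain : ∀ m : ℕ, m ≤ n →
      (fun i : Fin n => if (i : ℕ) < m then y i else x i) ∈ U := by
    intro m
    induction m with
    | zero =>
      intro _
      have : (fun i : Fin n => if (i : ℕ) < 0 then y i else x i) = x := by
        funext i; simp
      rw [this]; exact hx
    | succ m ih =>
      intro hm
      have hmn : m < n := hm
      have ha := ih (Nat.le_of_succ_le hm)
      set k : Fin n := ⟨m, hmn⟩ with hk
      set a : ∀ i, X i := fun i : Fin n => if (i : ℕ) < m then y i else x i with hadef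
      -- the section along coordinate k is clopen
      have hcont : Continuous fun t : X k => Function.update a k t :=
        (continuous_update k).comp (continuous_const.prodMk continuous_id)
      have hSclopen : IsClopen ((fun t : X k => Function.update a k t) ⁻¹' U) :=
        hU.preimage hcont
      have hak : a k = x k := by
        simp [hadef, hk]
      have haS : x k ∈ (fun t : X k => Function.update a k t) ⁻¹' U := by
        have : Function.update a k (x k) = a := by
          rw [← hak]; exact Function.update_eq_self k a
        simpa [Set.mem_preimage, this] using ha
      have hyS : y k ∈ (fun t : X k => Function.update a k t) ⁻¹' U :=
        key k _ hSclopen haS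
      have hb : Function.update a k (y k) =
          fun i : Fin n => if (i : ℕ) < m + 1 then y i else x i := by
        funext i
        rcases eq_or_ne i k with rfl | hik
        · simp [hk]
        · rw [Function.update_of_ne hik]
          have him : (i : ℕ) ≠ m := fun hh => hik (Fin.ext hh)
          have : ((i : ℕ) < m + 1) ↔ ((i : ℕ) < m) := by omega
          simp [hadef, this]
      rw [Set.mem_preimage, hb] at hyS
      exact hyS
  have := chain n le_rfl
  have hyy : (fun i : Fin n => if (i : ℕ) < n then y i else x i) = y := by
    funext i; simp [i.isLt]
  rw [hyy] at this
  exact hyU this
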